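/- For every real λ ∉ {a_0, …, a_n}: ∑_{i=0}^{n} v_i/(a_i − λ) − 1 = λ · ∏_{k=1}^{n}(λ_k − λ) / ∏_{i=0}^{n}(a_i − λ). -/

import Mathlib

open Polynomial Finset Lagrange

private lemma prod_sub_comm (t : Finset ℕ) (f : ℕ → ℝ) (c : ℝ) :
    ∏ k ∈ t, (f k - c) = (-1:ℝ)^(#t) * ∏ k ∈ t, (c - f k) := by
  rw [← Finset.prod_const (-1:ℝ), ← Finset.prod_mul_distrib]
  exact Finset.prod_congr rfl fun k _ => by ring



/-- defining identity of the elliptic coordinates.  With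
`v_i = a_i·∏_{k=1}^{n}(λ_k−a_i)/∏_{j≠i}(a_j−a_i)`, for every `λ ∉ {a_0,…,a_n}`:
`∑_{i=0}^{n} v_i/(a_i−λ) − 1 = λ·∏_{k=1}^{n}(λ_k−λ)/∏_{i=0}^{n}(a_i−λ)`. -/
theorem stmt_11 (n : ℕ) (hn : 1 ≤ n) (a : ℕ → ℝ)
    (ha : ∀ i ≤ n, ∀ j ≤ n, i ≠ j → a i ≠ a j)
    (lam : ℕ → ℝ) (v : ℕ → ℝ)
    (hv : ∀ i ≤ n, v i = a i * (∏ k ∈ Finset.Icc 1 n, (lam k - a i)) /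
      ∏ j ∈ (Finset.range (n + 1)).erase i, (a j - a i))
    (x : ℝ) (hx : ∀ i ≤ n, x ≠ a i) :
    ∑ i ∈ Finset.range (n + 1), v i / (a i - x) - 1 =
      x * (∏ k ∈ Finset.Icc 1 n, (lam k - x)) /
        ∏ i ∈ Finset.range (n + 1), (a i - x) := by
  classical
  set s : Finset ℕ := Finset.range (n+1) with hs
  have hmem : ∀ i, i ∈ s ↔ i ≤ n := by intro i; simp [hs, Nat.lt_succ_iff]
  have hinj : Set.InjOn a ↑s := by
    intro i hi j hj hij
    by_contra h
    exact ha i ((hmem i).1 hi) j ((hmem j).1 hj) h hij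
  have hcard : #s = n + 1 := by simp [hs]
  have hci : #(Finset.Icc 1 n) = n := by simp
  set M : ℝ[X] := X * ∏ k ∈ Finset.Icc 1 n, (X - C (lam k)) with hM
  have hMmonic : M.Monic :=
    monic_X.mul (monic_prod_of_monic _ _ fun k _ => monic_X_sub_C _)
  have hMdeg : M.degree = ((n+1 : ℕ) : WithBot ℕ) := by
    rw [hM, degree_mul, degree_X, degree_prod]
    simp [degree_X_sub_C, Nat.card_Icc]
    rw [← Nat.cast_one (R := WithBot ℕ), ← Nat.cast_add]
    norm_num [add_comm]
  have hNdeg : (nodal s a).degree = ((n+1 : ℕ) : WithBot ℕ) := by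
    rw [degree_nodal, hcard]
  have hdeglt : (M - nodal s a).degree < (#s : WithBot ℕ) := by
    have := degree_sub_lt (hMdeg.trans hNdeg.symm) hMmonic.ne_zero
      (by rw [hMmonic.leadingCoeff, (nodal_monic).leadingCoeff])
    rw [hMdeg] at this
    rwa [hcard]
  have hinterp := eq_interpolate hinj hdeglt
  have hxs : ∀ i ∈ s, x ≠ a i := fun i hi => hx i ((hmem i).1 hi)
  have heval := congrArg (Polynomial.eval x) hinterp
  rw [eval_interpolate_not_at_node _ hxs] at heval
  have hevalnode : ∀ i ∈ s, (M - nodal s a).eval (a i) = M.eval (a i) := by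
    intro i hi
    simp [eval_nodal_at_node hi]
  rw [Finset.sum_congr rfl (fun i hi => by rw [hevalnode i hi])] at heval
  have hvx : ∀ i ∈ s, v i / (a i - x)
      = -(nodalWeight s a i * (x - a i)⁻¹ * M.eval (a i)) := by
    intro i hi
    have hin : i ≤ n := (hmem i).1 hi
    have hce : #(s.erase i) = n := by
      simp [Finset.card_erase_of_mem hi, hcard]
    have hprodne : ∏ j ∈ s.erase i, (a i - a j) ≠ 0 := by
      rw [Finset.prod_ne_zero_iff]
      intro j hj
      have hj' := Finset.mem_erase.1 hj
      exact sub_ne_zero_of_ne (ha i hin j ((hmem j).1 hj'.2) (Ne.symm hj'.1))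
    have hMai : M.eval (a i) = a i * ∏ k ∈ Finset.Icc 1 n, (a i - lam k) := by
      simp [hM, eval_prod]
    have hw : nodalWeight s a i = (∏ j ∈ s.erase i, (a i - a j))⁻¹ := by
      rw [nodalWeight, ← Finset.prod_inv_distrib]
    have hxai : x - a i ≠ 0 := sub_ne_zero_of_ne (hx i hin)
    have hxai' : a i - x ≠ 0 := sub_ne_zero_of_ne (Ne.symm (hx i hin))
    rw [hv i hin, prod_sub_comm (Finset.Icc 1 n) lam (a i), hci,
      prod_sub_comm (s.erase i) a (a i), hce, hMai, hw]
    rcases Nat.even_or_odd n with hp | hp <;>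
      simp only [hp.neg_one_pow] <;> field_simp [hprodne, hxai, hxai'] <;> ring
  rw [Finset.sum_congr rfl hvx]
  have hNx : Polynomial.eval x (nodal s a) = ∏ i ∈ s, (x - a i) := eval_nodal
  have hNxne : Polynomial.eval x (nodal s a) ≠ 0 := by
    rw [hNx]
    exact Finset.prod_ne_zero_iff.2 fun i hi => sub_ne_zero_of_ne (hxs i hi)
  have hMx : Polynomial.eval x M = x * ∏ k ∈ Finset.Icc 1 n, (x - lam k) := by
    simp [hM, eval_prod]
  rw [eval_sub, hMx] at heval
  rw [prod_sub_comm (Finset.Icc 1 n) lam x, hci, prod_sub_comm s a x, hcard]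
  rw [Finset.sum_neg_distrib]
  rw [← hNx]
  have hT : (∑ i ∈ s, nodalWeight s a i * (x - a i)⁻¹ * Polynomial.eval (a i) M)
      = (x * ∏ k ∈ Finset.Icc 1 n, (x - lam k) - Polynomial.eval x (nodal s a))
        / Polynomial.eval x (nodal s a) := by
    rw [eq_div_iff hNxne]; linarith [heval]
  rw [hT]
  rcases Nat.even_or_odd n with hp | hp <;>
    simp only [pow_succ, hp.neg_one_pow] <;> field_simp [hNxne] <;> ring
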